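/- Let R be a finite local commutative ring with residue field F, and let M = {1/(1-t) : t ∈ T, t ≠ 1} where T is the Teichmüller group. If x ∈ I₀ = {x : x·rad(R) = 0} is nonzero, then M·x = R·x, i.e. the set {x/(1-t) : t ∈ T \ {1}} equals the ideal Rx, provided |F| > 2. -/
import Mathlib


/-- let `R` be a finite local commutative ring with residue field `F`,
`|F| > 2`, `T` the Teichmüller group, and `M = {1/(1-t) : t ∈ T, t ≠ 1}`. If
`x ∈ I₀ = {x : x·rad(R) = 0}` is nonzero, then the additive subgroup generated by
`M·x` equals the ideal `Rx`. -/
theorem stmt17 {R : Type*} [CommRing R] [Fintype R] [IsLocalRing R]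
    (hF : 2 < Nat.card (IsLocalRing.ResidueField R))
    (T : Subgroup Rˣ)
    (hT : Nat.card ↥T = Nat.card (IsLocalRing.ResidueField R) - 1)
    (x : R) (hx : x ≠ 0)
    (hxI0 : x ∈ IsLocalRing.maximalIdeal R ∧
      ∀ y ∈ IsLocalRing.maximalIdeal R, x * y = 0) :
    AddSubgroup.closure
        {y : R | ∃ t : Rˣ, t ∈ T ∧ t ≠ 1 ∧
          y = Ring.inverse ((1 : R) - (t : R)) * x} =
      (Ideal.span {x}).toAddSubgroup := by
  classical
  obtain ⟨hxm, hxkill⟩ := hxI0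
  set F := IsLocalRing.ResidueField R with hFdef
  set φ := IsLocalRing.residue R with hφdef
  have hFfin : Finite F := Finite.of_surjective _ (IsLocalRing.residue_surjective (R := R))
  have hFfint : Fintype F := Fintype.ofFinite _
  have hq0 : (Nat.card F : F) = 0 := by
    rw [Nat.card_eq_fintype_card]; exact Nat.cast_card_eq_zero _
  -- kill lemma
  have hkill : ∀ a b : R, φ a = φ b → a * x = b * x := by
    intro a b hab
    have hmem : a - b ∈ IsLocalRing.maximalIdeal R := by
      apply Ideal.Quotient.eq_zero_iff_mem.1
      show φ (a - b) = 0
      rw [map_sub, hab, sub_self]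
    have h0 : x * (a - b) = 0 := hxkill _ hmem
    have : x * a - x * b = 0 := by rw [← mul_sub]; exact h0
    linear_combination this
  -- units from nonzero residue
  have hunit : ∀ r : R, φ r ≠ 0 → IsUnit r := by
    intro r h
    by_contra h'
    exact h (Ideal.Quotient.eq_zero_iff_mem.2 ((IsLocalRing.mem_maximalIdeal r).2 h'))
  -- injectivity of residue on T
  have hinj : ∀ t : Rˣ, t ∈ T → φ (t : R) = 1 → (t : R) = 1 := by
    intro t ht h1
    have hpow : (t : R) ^ (Nat.card F - 1) = 1 := by
      have h := pow_card_eq_one' (x := (⟨t, ht⟩ : T))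
      rw [hT] at h
      have h2 : (t : Rˣ) ^ (Nat.card F - 1) = 1 := by
        have := congrArg (Subgroup.subtype T) h
        simpa using this
      have := congrArg (Units.val) h2
      simpa using this
    set k := Nat.card F - 1 with hk
    set s : R := ∑ i ∈ Finset.range k, (t : R) ^ i with hs
    have hs0 : s * ((t : R) - 1) = 0 := by
      rw [hs, geom_sum_mul, hpow, sub_self]
    have hφs : φ s = -1 := by
      have h1' : φ s = (k : F) := by
        rw [hs, map_sum]
        simp [map_pow, h1]
      rw [h1', hk]
      have hcast : ((Nat.card F - 1 : ℕ) : F) = (Nat.card F : F) - 1 := by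
        have : 1 ≤ Nat.card F := by omega
        push_cast [this]
        ring
      rw [hcast, hq0]
      ring
    have hsu : IsUnit s := hunit s (by rw [hφs]; simp)
    have : (t : R) - 1 = 0 := (hsu.mul_right_eq_zero).1 hs0
    linear_combination this
  -- surjectivity of residue on T onto Fˣ
  have hFufin : Finite Fˣ := inferInstance
  set f : ↥T →* Fˣ := (Units.map (φ : R →+* F).toMonoidHom).comp T.subtype with hfdef
  have hfinj : Function.Injective f := by
    rw [injective_iff_map_eq_one]
    rintro ⟨t, ht⟩ h1
    have : φ (t : R) = 1 := by
      have := congrArg (Units.val) h1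
      simpa [hfdef] using this
    ext
    exact hinj t ht this
  have hfbij : Function.Bijective f := by
    rw [Nat.bijective_iff_injective_and_card]
    refine ⟨hfinj, ?_⟩
    rw [hT, Nat.card_units]
  have hsurjT : ∀ c : F, c ≠ 0 → ∃ t : Rˣ, t ∈ T ∧ φ (t : R) = c := by
    intro c hc
    obtain ⟨a, ha⟩ := hfbij.2 (IsUnit.unit (isUnit_iff_ne_zero.2 hc))
    refine ⟨(a : Rˣ), a.2, ?_⟩
    have := congrArg (Units.val) ha
    simpa [hfdef] using this
  -- generator lemma
  have mem_gen : ∀ a : R, φ a ≠ 0 → φ a ≠ 1 →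
      a * x ∈ {y : R | ∃ t : Rˣ, t ∈ T ∧ t ≠ 1 ∧
        y = Ring.inverse ((1 : R) - (t : R)) * x} := by
    intro a ha0 ha1
    set c := φ a with hc
    have hd0 : (1 : F) - c⁻¹ ≠ 0 := by
      intro h
      apply ha1
      have : c⁻¹ = 1 := by linear_combination -h
      have := congrArg (·⁻¹) this
      simpa using this
    obtain ⟨t, ht, hφt⟩ := hsurjT (1 - c⁻¹) hd0
    have ht1 : t ≠ 1 := by
      intro h
      rw [h] at hφt
      simp at hφt
      exact (inv_ne_zero ha0) (by linear_combination hφt)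
    have hu : IsUnit ((1 : R) - (t : R)) := by
      apply hunit
      rw [map_sub, map_one, hφt]
      simp [inv_ne_zero ha0]
    have hφinv : φ (Ring.inverse ((1 : R) - (t : R))) = c := by
      have h1 := Ring.mul_inverse_cancel _ hu
      have h2 := congrArg φ h1
      rw [map_mul, map_one, map_sub, map_one, hφt] at h2
      have hc1 : (1 : F) - (1 - c⁻¹) = c⁻¹ := by ring
      rw [hc1] at h2
      field_simp at h2
      first
        | exact h2
        | exact h2.symm
        | linear_combination h2
    exact ⟨t, ht, ht1, (hkill _ _ (by rw [hφinv])).symm⟩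
  -- main proof
  apply le_antisymm
  · rw [AddSubgroup.closure_le]
    rintro y ⟨t, ht, ht1, rfl⟩
    exact Ideal.mem_span_singleton'.2 ⟨_, rfl⟩
  · intro y hy
    have hy' : y ∈ Ideal.span {x} := hy
    obtain ⟨a, rfl⟩ := Ideal.mem_span_singleton'.1 hy'
    by_cases h0 : φ a = 0
    · have hmem : a ∈ IsLocalRing.maximalIdeal R := Ideal.Quotient.eq_zero_iff_mem.1 h0
      have : a * x = 0 := by rw [mul_comm]; exact hxkill a hmem
      rw [this]
      exact zero_mem _
    by_cases h1 : φ a = 1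
    · obtain ⟨c, hc0, hc1⟩ : ∃ c : F, c ≠ 0 ∧ c ≠ 1 := by
        by_contra h
        push_neg at h
        have hinj2 : Function.Injective (fun c : F => if c = 0 then (0 : Fin 2) else 1) := by
          intro u v huv
          simp only at huv
          by_cases hu : u = 0 <;> by_cases hv : v = 0 <;>
            simp [hu, hv] at huv ⊢
          · rw [h u hu, h v hv]
        have hle := Nat.card_le_card_of_injective _ hinj2
        have h2' : Nat.card (Fin 2) = 2 := by simp
        omega
      obtain ⟨b, hb0⟩ := IsLocalRing.residue_surjective (R := R) c
      have hb : φ b = c := hb0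
      have heq : a * x = b * x + (1 - b) * x := by
        have : a * x = 1 * x := hkill a 1 (by rw [h1, map_one])
        rw [this]; ring
      rw [heq]
      have hb1 : φ (1 - b) = 1 - c := by rw [map_sub, map_one, hb]
      refine add_mem (AddSubgroup.subset_closure (mem_gen b ?_ ?_))
        (AddSubgroup.subset_closure (mem_gen (1 - b) ?_ ?_))
      · rw [hb]; exact hc0
      · rw [hb]; exact hc1
      · rw [hb1]; intro h; apply hc1; linear_combination -h
      · rw [hb1]; intro h; apply hc0; linear_combination -h
    · exact AddSubgroup.subset_closure (mem_gen a h0 h1)
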